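/- For any real numbers α, β ∈ ℝ, any n ≥ 4, any x ∈ ℝ^n, and any k with 3 ≤ k ≤ n−1, we have S_k(x)^2 ≥ S_{k-1}(x) S_{k+1}(x), where S_k(x) = E_k(x) + (α+β)E_{k-1}(x) + αβ E_{k-2}(x). -/

import Mathlib

section AuxNewton
open Polynomial

def RR (p : ℝ[X]) : Prop := Multiset.card p.roots = p.natDegree

lemma RR_C (c : ℝ) : RR (C c) := by unfold RR; rw [roots_C, natDegree_C]; rfl

lemma RR_zero : RR 0 := by unfold RR; simp

lemma RR_mul {p q : ℝ[X]} (hp : RR p) (hq : RR q) : RR (p * q) := by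
  rcases eq_or_ne p 0 with rfl | hp0
  · simpa using RR_zero
  rcases eq_or_ne q 0 with rfl | hq0
  · simpa using RR_zero
  unfold RR at *
  rw [roots_mul (mul_ne_zero hp0 hq0), natDegree_mul hp0 hq0, Multiset.card_add, hp, hq]

lemma RR_X_sub_C (a : ℝ) : RR (X - C a) := by
  unfold RR; rw [roots_X_sub_C, natDegree_X_sub_C]; rfl

lemma RR_linear (a b : ℝ) : RR (C a * X + C b) := by
  rcases eq_or_ne a 0 with rfl | ha
  · simpa using RR_C b
  · have : C a * X + C b = C a * (X - C (-b / a)) := by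
      rw [mul_sub, ← C_mul]
      rw [show a * (-b / a) = -b by field_simp]
      rw [map_neg]
      ring
    rw [this]
    exact RR_mul (RR_C a) (RR_X_sub_C _)

lemma RR_factor {p : ℝ[X]} (hp : RR p) :
    p = C p.leadingCoeff * (Multiset.map (fun a => X - C a) p.roots).prod :=
  (C_leadingCoeff_mul_prod_multiset_X_sub_C hp).symm

lemma RR_derivative {p : ℝ[X]} (hp : RR p) : RR (derivative p) := by
  rcases Nat.eq_zero_or_pos p.natDegree with h0 | hpos
  · rw [eq_C_of_natDegree_eq_zero h0, derivative_C]; exact RR_zero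
  · have h1 := card_roots_le_derivative p
    have h2 := card_roots' (derivative p)
    have h3 := natDegree_derivative_le p
    unfold RR at *
    omega

lemma reverse_X_sub_C (a : ℝ) : (X - C a).reverse = C (-a) * X + C 1 := by
  rw [reverse, natDegree_X_sub_C, reflect_sub]
  have h1 : reflect 1 (X : ℝ[X]) = 1 := by
    have : (X : ℝ[X]) = X ^ 1 := (pow_one X).symm
    rw [this, reflect_monomial]
    norm_num
  have h2 : reflect 1 (C a : ℝ[X]) = C a * X := by
    have : (C a : ℝ[X]) = C a * X ^ 0 := by simp
    rw [this, reflect_C_mul, reflect_monomial]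
    norm_num
  rw [h1, h2, map_neg]
  rw [map_one]
  ring

lemma RR_reverse {p : ℝ[X]} (hp : RR p) : RR p.reverse := by
  rw [RR_factor hp, reverse_mul_of_domain, reverse_C]
  refine RR_mul (RR_C _) ?_
  generalize p.roots = s
  induction s using Multiset.induction with
  | empty => 
    have : (reverse (1:ℝ[X])) = C 1 := by
      rw [show (1:ℝ[X]) = C 1 by simp, reverse_C]
    rw [Multiset.map_zero, Multiset.prod_zero]
    rw [this]
    exact RR_C 1
  | cons a t ih =>
    rw [Multiset.map_cons, Multiset.prod_cons, reverse_mul_of_domain, reverse_X_sub_C]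
    exact RR_mul (RR_linear _ _) ih


lemma RR_X_pow (t : ℕ) : RR ((X : ℝ[X]) ^ t) := by
  induction t with
  | zero => simpa using RR_C 1
  | succ n ih =>
    rw [pow_succ]
    exact RR_mul ih (by simpa using RR_X_sub_C 0)

lemma RR_comp_X_add_C (hp : RR p) (c : ℝ) : RR (p.comp (X + C c)) := by
  rw [RR_factor hp, mul_comp, C_comp]
  refine RR_mul (RR_C _) ?_
  generalize p.roots = s
  induction s using Multiset.induction with
  | empty =>
    simp only [Multiset.map_zero, Multiset.prod_zero, one_comp]
    simpa using RR_C 1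
  | cons a t ih =>
    rw [Multiset.map_cons, Multiset.prod_cons, mul_comp]
    refine RR_mul ?_ ih
    have : (X - C a).comp (X + C c) = X - C (a - c) := by
      rw [sub_comp, X_comp, C_comp, map_sub]; ring
    rw [this]
    exact RR_X_sub_C _

lemma natDegree_reflect_le {f : ℝ[X]} {N : ℕ} (h : f.natDegree ≤ N) :
    (reflect N f).natDegree ≤ N := by
  apply natDegree_le_iff_coeff_eq_zero.mpr
  intro i hi
  rw [coeff_reflect, revAt_eq_self_of_lt hi]
  exact coeff_eq_zero_of_natDegree_lt (lt_of_le_of_lt h hi)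

lemma reflect_eq_X_pow_mul_reverse (q : ℝ[X]) (N : ℕ) (h : q.natDegree ≤ N) :
    reflect N q = q.reverse * X ^ (N - q.natDegree) := by
  ext i
  rw [coeff_reflect, coeff_mul_X_pow']
  by_cases hi : i ≤ N
  · rw [revAt_le hi]
    by_cases h2 : N - q.natDegree ≤ i
    · rw [if_pos h2, reverse, coeff_reflect]
      by_cases h3 : i - (N - q.natDegree) ≤ q.natDegree
      · rw [revAt_le h3]
        congr 1
        omega
      · exfalso; omega
    · rw [if_neg h2]
      exact coeff_eq_zero_of_natDegree_lt (by omega)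
  · push_neg at hi
    rw [revAt_eq_self_of_lt hi, if_pos (by omega)]
    rw [coeff_eq_zero_of_natDegree_lt (by omega : q.natDegree < i)]
    refine (coeff_eq_zero_of_natDegree_lt ?_).symm
    have := reverse_natDegree_le q
    omega

lemma RR_reflect {q : ℝ[X]} (N : ℕ) (h : q.natDegree ≤ N) (hq : RR q) :
    RR (reflect N q) := by
  rw [reflect_eq_X_pow_mul_reverse q N h]
  exact RR_mul (RR_reverse hq) (RR_X_pow _)

/-- polar derivative (with respect to degree bound m and pole z) -/
noncomputable def polarD (m : ℕ) (z : ℝ) (p : ℝ[X]) : ℝ[X] :=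
  C (m : ℝ) * p + (C z - X) * derivative p

lemma coeff_X_mul_derivative (q : ℝ[X]) (j : ℕ) :
    (X * derivative q).coeff j = q.coeff j * j := by
  cases j with
  | zero => simp
  | succ i => rw [coeff_X_mul, coeff_derivative]; push_cast; ring

lemma polarD_key (M : ℕ) (q : ℝ[X]) (hq : q.natDegree ≤ M + 1) :
    C ((M+1 : ℕ) : ℝ) * q - X * derivative q
      = reflect M (derivative (reflect (M+1) q)) := by
  ext j
  rw [coeff_reflect]
  by_cases hj : j ≤ M
  · rw [revAt_le hj, coeff_derivative, coeff_reflect,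
      revAt_le (by omega : M - j + 1 ≤ M + 1)]
    have : M + 1 - (M - j + 1) = j := by omega
    rw [this]
    rw [coeff_sub, coeff_C_mul, coeff_X_mul_derivative]
    push_cast [Nat.cast_sub (by omega : j ≤ M)]
    ring
  · push_neg at hj
    rw [revAt_eq_self_of_lt hj]
    have hd : (derivative (reflect (M+1) q)).natDegree ≤ M := by
      have h1 := natDegree_derivative_le (reflect (M+1) q)
      have h2 := natDegree_reflect_le (f := q) (N := M+1) hq
      omega
    rw [coeff_eq_zero_of_natDegree_lt (lt_of_le_of_lt hd hj),
      coeff_sub, coeff_C_mul, coeff_X_mul_derivative]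
    by_cases hj2 : j = M + 1
    · subst hj2; push_cast; ring
    · rw [coeff_eq_zero_of_natDegree_lt (by omega : q.natDegree < j)]
      ring

/-- normalized coefficients -/
noncomputable def NE (p : ℝ[X]) (m j : ℕ) : ℝ := p.coeff j / (m.choose j : ℝ)

lemma polarD_coeff (M : ℕ) (z : ℝ) (p : ℝ[X]) (j : ℕ) :
    (polarD (M+1) z p).coeff j
      = ((M:ℝ) + 1 - j) * p.coeff j + z * (j+1) * p.coeff (j+1) := by
  unfold polarD
  have h : (C z - X) * derivative p = C z * derivative p - X * derivative p := by ring
  rw [h, coeff_add, coeff_sub, coeff_C_mul, coeff_C_mul, coeff_X_mul_derivative,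
    coeff_derivative]
  push_cast
  ring

lemma natDegree_polarD (M : ℕ) (z : ℝ) (p : ℝ[X]) (hd : p.natDegree ≤ M + 1) :
    (polarD (M+1) z p).natDegree ≤ M := by
  apply natDegree_le_iff_coeff_eq_zero.mpr
  intro j hj
  rw [polarD_coeff]
  have h2 : p.coeff (j+1) = 0 := coeff_eq_zero_of_natDegree_lt (by omega)
  by_cases h1 : j = M + 1
  · subst h1; rw [h2]; push_cast; ring
  · rw [h2, coeff_eq_zero_of_natDegree_lt (by omega : p.natDegree < j)]; ring

lemma choose_cast_A (M j : ℕ) (hj : j ≤ M) :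
    ((M:ℝ) + 1 - j) * ((M+1).choose j : ℝ) = ((M:ℝ)+1) * (M.choose j : ℝ) := by
  have h := Nat.choose_mul_succ_eq M j
  have h2 : ((M.choose j * (M+1) : ℕ) : ℝ) = (((M+1).choose j * (M + 1 - j) : ℕ) : ℝ) := by
    exact_mod_cast congrArg (Nat.cast (R := ℝ)) h
  push_cast [Nat.cast_sub (by omega : j ≤ M + 1)] at h2
  linarith

lemma choose_cast_B (M j : ℕ) :
    ((j:ℝ) + 1) * ((M+1).choose (j+1) : ℝ) = ((M:ℝ)+1) * (M.choose j : ℝ) := by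
  have h := Nat.add_one_mul_choose_eq M j
  have h2 : (((M+1) * M.choose j : ℕ) : ℝ) = (((M+1).choose (j+1) * (j+1) : ℕ) : ℝ) := by
    exact_mod_cast congrArg (Nat.cast (R := ℝ)) h
  push_cast at h2
  linarith

lemma choose_cast_pos (m j : ℕ) (h : j ≤ m) : (0:ℝ) < (m.choose j : ℝ) := by
  exact_mod_cast Nat.choose_pos h

lemma NE_polarD (M : ℕ) (z : ℝ) (p : ℝ[X]) (j : ℕ) (hj : j ≤ M) :
    NE (polarD (M+1) z p) M j
      = ((M:ℝ)+1) * (NE p (M+1) j + z * NE p (M+1) (j+1)) := by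
  unfold NE
  rw [polarD_coeff]
  have hC0 := choose_cast_pos M j hj
  have hC1 := choose_cast_pos (M+1) j (by omega)
  have hC2 := choose_cast_pos (M+1) (j+1) (by omega)
  have eA : ((M:ℝ) + 1 - j) / (M.choose j : ℝ) = ((M:ℝ)+1) / (((M+1).choose j : ℝ)) := by
    rw [div_eq_div_iff (ne_of_gt hC0) (ne_of_gt hC1)]
    linarith [choose_cast_A M j hj]
  have eB : ((j:ℝ) + 1) / (M.choose j : ℝ) = ((M:ℝ)+1) / (((M+1).choose (j+1) : ℝ)) := by
    rw [div_eq_div_iff (ne_of_gt hC0) (ne_of_gt hC2)]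
    linarith [choose_cast_B M j]
  calc (((M:ℝ) + 1 - j) * p.coeff j + z * ((j:ℝ)+1) * p.coeff (j+1)) / (M.choose j : ℝ)
      = (((M:ℝ) + 1 - j) / (M.choose j : ℝ)) * p.coeff j
        + (((j:ℝ)+1) / (M.choose j : ℝ)) * (z * p.coeff (j+1)) := by ring
    _ = (((M:ℝ)+1) / (((M+1).choose j : ℝ))) * p.coeff j
        + (((M:ℝ)+1) / (((M+1).choose (j+1) : ℝ))) * (z * p.coeff (j+1)) := by rw [eA, eB]
    _ = ((M:ℝ)+1) * (p.coeff j / (((M+1).choose j : ℝ))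
        + z * (p.coeff (j+1) / (((M+1).choose (j+1) : ℝ)))) := by ring

lemma NE_derivative (M : ℕ) (p : ℝ[X]) (j : ℕ) (hj : j ≤ M) :
    NE (derivative p) M j = ((M:ℝ)+1) * NE p (M+1) (j+1) := by
  unfold NE
  rw [coeff_derivative]
  have hC0 := choose_cast_pos M j hj
  have hC2 := choose_cast_pos (M+1) (j+1) (by omega)
  field_simp
  linear_combination p.coeff (j + 1) * choose_cast_B M j


lemma RR_polarD (M : ℕ) (z : ℝ) {p : ℝ[X]} (hp : RR p) (hd : p.natDegree ≤ M + 1) :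
    RR (polarD (M+1) z p) := by
  set q := p.comp (X + C z) with hqdef
  have hqRR : RR q := RR_comp_X_add_C hp z
  have hqd : q.natDegree ≤ M + 1 := by
    rw [hqdef, natDegree_comp, natDegree_X_add_C, mul_one]; exact hd
  have h3 : RR (C ((M+1:ℕ):ℝ) * q - X * derivative q) := by
    rw [polarD_key M q hqd]
    refine RR_reflect M ?_ (RR_derivative (RR_reflect (M+1) hqd hqRR))
    have h1 := natDegree_derivative_le (reflect (M+1) q)
    have h2 := natDegree_reflect_le hqd
    omega
  have h4 := RR_comp_X_add_C h3 (-z)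
  have h5 : (C ((M+1:ℕ):ℝ) * q - X * derivative q).comp (X + C (-z))
      = polarD (M+1) z p := by
    have haux : (X + C z).comp (X + C (-z)) = X := by
      rw [add_comp, X_comp, C_comp, map_neg]; ring
    have e1 : q.comp (X + C (-z)) = p := by
      rw [hqdef, comp_assoc, haux, comp_X]
    have e2 : (derivative q).comp (X + C (-z)) = derivative p := by
      rw [hqdef, derivative_comp, derivative_X_add_C, one_mul, comp_assoc, haux, comp_X]
    rw [sub_comp, mul_comp, mul_comp, C_comp, X_comp, e1, e2]
    unfold polarD
    push_cast [map_neg]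
    ring
  rw [h5] at h4
  exact h4


lemma RR_exists_factor {p : ℝ[X]} (hp : RR p) (h : 0 < p.natDegree) :
    ∃ (r : ℝ) (q : ℝ[X]), p = (X - C r) * q ∧ RR q ∧ q.natDegree = p.natDegree - 1 := by
  have hp' : Multiset.card p.roots = p.natDegree := hp
  have hp0 : p ≠ 0 := fun h0 => by rw [h0] at h; simp at h
  have hroots : p.roots ≠ 0 := by
    intro h0
    rw [h0] at hp'
    simp at hp'
    omega
  obtain ⟨r, hr⟩ := Multiset.exists_mem_of_ne_zero hroots
  have hr' : IsRoot p r := isRoot_of_mem_roots hr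
  have hfac : (X - C r) * (p /ₘ (X - C r)) = p := mul_divByMonic_eq_iff_isRoot.mpr hr'
  set q := p /ₘ (X - C r) with hqdef
  have hq0 : q ≠ 0 := by
    intro h0
    rw [h0, mul_zero] at hfac
    exact hp0 hfac.symm
  have hdeg : q.natDegree = p.natDegree - 1 := by
    have h1 := natDegree_mul (X_sub_C_ne_zero r) hq0
    rw [hfac, natDegree_X_sub_C] at h1
    omega
  refine ⟨r, q, hfac.symm, ?_, hdeg⟩
  show Multiset.card _ = _
  have hro := roots_mul (hfac.symm ▸ hp0 : (X - C r) * q ≠ 0)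
  rw [hfac] at hro
  rw [hro, roots_X_sub_C, Multiset.card_add] at hp'
  simp only [Multiset.card_singleton] at hp'
  omega


lemma CS : ∀ (d : ℕ) (p : ℝ[X]) (M : ℕ), RR p → p.natDegree ≤ d → d ≤ M →
    2*(M:ℝ)*(p.coeff 0 * p.coeff 2) ≤ ((M:ℝ)-1) * (p.coeff 1)^2 := by
  intro d
  induction d with
  | zero =>
    intro p M hp hd hM
    have h1 : p.coeff 1 = 0 := coeff_eq_zero_of_natDegree_lt (by omega)
    have h2 : p.coeff 2 = 0 := coeff_eq_zero_of_natDegree_lt (by omega)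
    simp [h1, h2]
  | succ d ih =>
    intro p M hp hd hM
    by_cases hdle : p.natDegree ≤ d
    · exact ih p M hp hdle (by omega)
    · have hdeq : p.natDegree = d + 1 := by omega
      rcases Nat.lt_or_ge (d+1) 2 with hsmall | hbig
      · have h2 : p.coeff 2 = 0 := coeff_eq_zero_of_natDegree_lt (by omega)
        have hm1 : (1:ℝ) ≤ (M:ℝ) := by exact_mod_cast (by omega : 1 ≤ M)
        rw [h2]
        nlinarith [sq_nonneg (p.coeff 1)]
      · obtain ⟨r, q, hfac, hq, hqd⟩ := RR_exists_factor hp (by omega)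
        have hM2 : (2:ℝ) ≤ (M:ℝ) := by exact_mod_cast (by omega : 2 ≤ M)
        have IH := ih q (M-1) hq (by omega) (by omega)
        have hMcast : ((M-1:ℕ):ℝ) = (M:ℝ) - 1 := by
          push_cast [Nat.cast_sub (by omega : 1 ≤ M)]; ring
        rw [hMcast] at IH
        have hc0 : p.coeff 0 = - (r * q.coeff 0) := by
          rw [hfac, sub_mul, coeff_sub, coeff_C_mul, mul_coeff_zero, coeff_X_zero]
          ring
        have hc1 : p.coeff 1 = q.coeff 0 - r * q.coeff 1 := by
          rw [hfac, sub_mul, coeff_sub, coeff_C_mul, coeff_X_mul]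
        have hc2 : p.coeff 2 = q.coeff 1 - r * q.coeff 2 := by
          rw [hfac, sub_mul, coeff_sub, coeff_C_mul]
          rw [show (2:ℕ) = 1 + 1 from rfl, coeff_X_mul]
        have key : ((M:ℝ)-1) * (((M:ℝ)-1)*(p.coeff 1)^2 - 2*(M:ℝ)*(p.coeff 0 * p.coeff 2))
            = (((M:ℝ)-1)*q.coeff 0 + r*q.coeff 1)^2
              + r^2*(M:ℝ)*((((M:ℝ)-1)-1)*(q.coeff 1)^2
                - 2*((M:ℝ)-1)*(q.coeff 0*q.coeff 2)) := by
          rw [hc0, hc1, hc2]; ring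
        have hrhs : (0:ℝ) ≤ (((M:ℝ)-1)*q.coeff 0 + r*q.coeff 1)^2
              + r^2*(M:ℝ)*((((M:ℝ)-1)-1)*(q.coeff 1)^2
                - 2*((M:ℝ)-1)*(q.coeff 0*q.coeff 2)) := by
          apply add_nonneg (sq_nonneg _)
          apply mul_nonneg (mul_nonneg (sq_nonneg r) (by linarith))
          linarith
        nlinarith [key, hrhs]

lemma choose_two_cast (m : ℕ) (hm : 1 ≤ m) : (m.choose 2 : ℝ) = (m:ℝ)*((m:ℝ)-1)/2 := by
  obtain ⟨t, rfl⟩ : ∃ t, m = t + 1 := ⟨m - 1, by omega⟩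
  have h : 2 * (t+1).choose 2 = (t+1) * t := by
    rw [Nat.choose_two_right, Nat.add_sub_cancel]
    have he : 2 ∣ (t+1) * t := by
      rw [mul_comm]
      exact (Nat.even_mul_succ_self t).two_dvd
    omega
  have h2 := congrArg (fun x : ℕ => (x:ℝ)) h
  push_cast at h2 ⊢
  linarith

theorem newton : ∀ (k : ℕ) (p : ℝ[X]) (m : ℕ), RR p → p.natDegree ≤ m → 1 ≤ k → k + 1 ≤ m →
    NE p m (k-1) * NE p m (k+1) ≤ (NE p m k)^2 := by
  intro k
  induction k with
  | zero => intro p m _ _ h; omega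
  | succ k ihk =>
    intro p m hp hdeg _ hkm
    by_cases hk0 : k = 0
    · subst hk0
      have hm2 : 2 ≤ m := hkm
      have hCS := CS m p m hp hdeg le_rfl
      have hm0 : (0:ℝ) < (m:ℝ) := by exact_mod_cast (by omega : 0 < m)
      have hm1 : (0:ℝ) < (m:ℝ)-1 := by
        have : (2:ℝ) ≤ (m:ℝ) := by exact_mod_cast hm2
        linarith
      show NE p m 0 * NE p m 2 ≤ (NE p m 1)^2
      unfold NE
      rw [Nat.choose_zero_right, Nat.choose_one_right, choose_two_cast m (by omega)]
      rw [Nat.cast_one, div_one, div_pow]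
      have e1 : p.coeff 0 * (p.coeff 2 / ((m:ℝ)*((m:ℝ)-1)/2))
          = (p.coeff 0 * p.coeff 2) / ((m:ℝ)*((m:ℝ)-1)/2) := by ring
      rw [e1, div_le_div_iff₀ (by positivity) (by positivity)]
      nlinarith [hCS, hm0, hm1]
    · have hk1 : 1 ≤ k := by omega
      obtain ⟨M, rfl⟩ : ∃ M, m = M + 1 := ⟨m - 1, by omega⟩
      have hder := ihk (derivative p) M (RR_derivative hp)
        (by have := natDegree_derivative_le p; omega) hk1 (by omega)
      rw [NE_derivative M _ (k-1) (by omega), NE_derivative M _ k (by omega),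
        NE_derivative M _ (k+1) (by omega)] at hder
      have hkk : k - 1 + 1 = k := by omega
      rw [hkk] at hder
      have hMpos : (0:ℝ) < ((M:ℝ)+1) := by positivity
      show NE p (M+1) (k+1-1) * NE p (M+1) (k+1+1) ≤ (NE p (M+1) (k+1))^2
      simp only [Nat.add_sub_cancel]
      apply le_of_mul_le_mul_left _ (show (0:ℝ) < ((M:ℝ)+1)^2 by positivity)
      ring_nf
      ring_nf at hder
      linarith


lemma lemB (A B C : ℝ) (h : ∀ t : ℝ, 0 ≤ A*t^2 + B*t + C) : B^2 ≤ 4*(A*C) := by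
  have := discrim_le_zero (a := A) (b := B) (c := C) (fun x => by
    have := h x; nlinarith [this])
  unfold discrim at this
  nlinarith [this]

lemma lemA (A B C : ℝ) (hA : 0 ≤ A) (hC : 0 ≤ C) (h : B^2 ≤ 4*(A*C)) (t : ℝ) :
    0 ≤ A*t^2 + B*t + C := by
  rcases eq_or_lt_of_le hA with hA0 | hA0
  · have hB : B = 0 := by nlinarith [sq_nonneg B]
    rw [hB, ← hA0]
    simpa using hC
  · nlinarith [sq_nonneg (2*A*t + B)]

lemma core (E0 E1 E2 E3 E4 : ℝ)
    (hN2 : E1 * E3 ≤ E2^2) (hN1 : E0 * E2 ≤ E1^2) (hN0 : E2*E4 ≤ E3^2)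
    (hU1 : ∀ s : ℝ, (E1 + s*E2)*(E3 + s*E4) ≤ (E2 + s*E3)^2)
    (hU2 : ∀ s : ℝ, (E0 + s*E1)*(E2 + s*E3) ≤ (E1 + s*E2)^2)
    (hW : ∀ s t : ℝ, ((E0+s*E1) + t*(E1+s*E2)) * ((E2+s*E3) + t*(E3+s*E4))
        ≤ ((E1+s*E2) + t*(E2+s*E3))^2)
    (α β : ℝ) :
    (E2 + (α+β)*E1 + α*β*E0) * (E4 + (α+β)*E3 + α*β*E2)
      ≤ (E3 + (α+β)*E2 + α*β*E1)^2 := by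
  set Nu1 : ℝ → ℝ := fun s => (E2 + s*E3)^2 - (E1 + s*E2)*(E3 + s*E4) with hNu1
  set Nu2 : ℝ → ℝ := fun s => (E1 + s*E2)^2 - (E0 + s*E1)*(E2 + s*E3) with hNu2
  set G : ℝ → ℝ := fun s => (E1+s*E2)*(E2+s*E3) - (E0+s*E1)*(E3+s*E4) with hG
  have step3 : ∀ s : ℝ, (G s)^2 ≤ 4*(Nu1 s * Nu2 s) := by
    intro s
    apply lemB
    intro t
    have := hW s t
    simp only [hNu1, hNu2, hG]
    nlinarith [this]
  have step4 : ∀ s a : ℝ, 0 ≤ (Nu2 s)*a^2 + (G s)*a + (Nu1 s) := by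
    intro s a
    apply lemA
    · have := hU2 s; simp only [hNu2]; nlinarith [this]
    · have := hU1 s; simp only [hNu1]; nlinarith [this]
    · have := step3 s; nlinarith [this]
  set NT1 : ℝ → ℝ := fun a => (E3+a*E2)^2 - (E2+a*E1)*(E4+a*E3) with hNT1
  set NT2 : ℝ → ℝ := fun a => (E2+a*E1)^2 - (E1+a*E0)*(E3+a*E2) with hNT2
  set GT : ℝ → ℝ := fun a => (E2+a*E1)*(E3+a*E2) - (E1+a*E0)*(E4+a*E3) with hGT
  have step5 : ∀ a : ℝ, (GT a)^2 ≤ 4*(NT1 a * NT2 a) := by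
    intro a
    apply lemB
    intro s
    have := step4 s a
    simp only [hNT1, hNT2, hGT]
    simp only [hNu1, hNu2, hG] at this
    nlinarith [this]
  have step6a : ∀ a : ℝ, 0 ≤ NT1 a := by
    intro a
    have hB : (E2*E3 - E1*E4)^2 ≤ 4*((E3^2 - E2*E4)*(E2^2-E1*E3)) := by
      apply lemB
      intro s
      have := hU1 s
      nlinarith [this]
    have := lemA (E2^2-E1*E3) (E2*E3-E1*E4) (E3^2-E2*E4)
      (by nlinarith [hN2]) (by nlinarith [hN0]) (by nlinarith [hB]) a
    simp only [hNT1]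
    nlinarith [this]
  have step6b : ∀ a : ℝ, 0 ≤ NT2 a := by
    intro a
    have hB : (E1*E2 - E0*E3)^2 ≤ 4*((E2^2 - E1*E3)*(E1^2-E0*E2)) := by
      apply lemB
      intro s
      have := hU2 s
      nlinarith [this]
    have := lemA (E1^2-E0*E2) (E1*E2-E0*E3) (E2^2-E1*E3)
      (by nlinarith [hN1]) (by nlinarith [hN2]) (by nlinarith [hB]) a
    simp only [hNT2]
    nlinarith [this]
  have step7 : 0 ≤ (NT2 α)*β^2 + (GT α)*β + (NT1 α) :=
    lemA _ _ _ (step6b α) (step6a α) (by have := step5 α; nlinarith [this]) β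
  simp only [hNT1, hNT2, hGT] at step7
  nlinarith [step7]

lemma cancel_sq {c x y z : ℝ} (hc : 0 < c) (h : (c*x)*(c*y) ≤ (c*z)^2) : x*y ≤ z^2 := by
  have h2 : c^2 * (x*y) ≤ c^2 * z^2 := by nlinarith [h]
  exact (mul_le_mul_iff_right₀ (by positivity : (0:ℝ) < c^2)).mp h2

lemma newtonU (M2 : ℕ) (p : ℝ[X]) (hp : RR p) (hd : p.natDegree ≤ M2 + 1 + 1)
    (s : ℝ) (j : ℕ) (hj : j + 2 ≤ M2 + 1) :
    (NE p (M2+1+1) j + s * NE p (M2+1+1) (j+1))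
      * (NE p (M2+1+1) (j+2) + s * NE p (M2+1+1) (j+3))
    ≤ (NE p (M2+1+1) (j+1) + s * NE p (M2+1+1) (j+2)) ^ 2 := by
  have hP1RR : RR (polarD (M2+1+1) s p) := RR_polarD (M2+1) s hp hd
  have hP1deg : (polarD (M2+1+1) s p).natDegree ≤ M2 + 1 :=
    natDegree_polarD (M2+1) s p hd
  have h := newton (j+1) (polarD (M2+1+1) s p) (M2+1) hP1RR hP1deg (by omega) (by omega)
  simp only [Nat.add_sub_cancel] at h
  rw [NE_polarD (M2+1) s p j (by omega), NE_polarD (M2+1) s p (j+1) (by omega),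
    NE_polarD (M2+1) s p (j+2) (by omega)] at h
  have hcast : ((M2+1:ℕ):ℝ) + 1 = (M2:ℝ) + 1 + 1 := by push_cast; ring
  rw [hcast] at h
  have e1 : NE p (M2+1+1) (j+1+1) = NE p (M2+1+1) (j+2) := by norm_num
  have e2 : NE p (M2+1+1) (j+2+1) = NE p (M2+1+1) (j+3) := by norm_num
  rw [e1, e2] at h
  exact cancel_sq (by positivity : (0:ℝ) < (M2:ℝ) + 1 + 1) h

lemma newtonW (M2 : ℕ) (p : ℝ[X]) (hp : RR p) (hd : p.natDegree ≤ M2 + 1 + 1)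
    (s t : ℝ) (j : ℕ) (hj : j + 2 ≤ M2) :
    ((NE p (M2+1+1) j + s * NE p (M2+1+1) (j+1)) + t * (NE p (M2+1+1) (j+1) + s * NE p (M2+1+1) (j+2)))
      * ((NE p (M2+1+1) (j+2) + s * NE p (M2+1+1) (j+3)) + t * (NE p (M2+1+1) (j+3) + s * NE p (M2+1+1) (j+4)))
    ≤ ((NE p (M2+1+1) (j+1) + s * NE p (M2+1+1) (j+2)) + t * (NE p (M2+1+1) (j+2) + s * NE p (M2+1+1) (j+3))) ^ 2 := by
  have hP1RR : RR (polarD (M2+1+1) s p) := RR_polarD (M2+1) s hp hd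
  have hP1deg : (polarD (M2+1+1) s p).natDegree ≤ M2 + 1 :=
    natDegree_polarD (M2+1) s p hd
  have hP2RR : RR (polarD (M2+1) t (polarD (M2+1+1) s p)) := RR_polarD M2 t hP1RR hP1deg
  have hP2deg : (polarD (M2+1) t (polarD (M2+1+1) s p)).natDegree ≤ M2 :=
    natDegree_polarD M2 t _ hP1deg
  have h := newton (j+1) _ M2 hP2RR hP2deg (by omega) (by omega)
  simp only [Nat.add_sub_cancel] at h
  have hNE1 : ∀ i, i ≤ M2 + 1 → NE (polarD (M2+1+1) s p) (M2+1) i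
      = ((M2:ℝ) + 1 + 1) * (NE p (M2+1+1) i + s * NE p (M2+1+1) (i+1)) := by
    intro i hi
    rw [NE_polarD (M2+1) s p i hi]
    push_cast
    ring
  have hNE2 : ∀ i, i ≤ M2 → NE (polarD (M2+1) t (polarD (M2+1+1) s p)) M2 i
      = (((M2:ℝ) + 1) * ((M2:ℝ) + 1 + 1)) *
          ((NE p (M2+1+1) i + s * NE p (M2+1+1) (i+1))
            + t * (NE p (M2+1+1) (i+1) + s * NE p (M2+1+1) (i+2))) := by
    intro i hi
    rw [NE_polarD M2 t _ i hi, hNE1 i (by omega), hNE1 (i+1) (by omega)]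
    push_cast
    ring
  rw [hNE2 j (by omega), hNE2 (j+1) (by omega), hNE2 (j+2) (by omega)] at h
  have e1 : NE p (M2+1+1) (j+1+1) = NE p (M2+1+1) (j+2) := by norm_num
  have e2 : NE p (M2+1+1) (j+2+1) = NE p (M2+1+1) (j+3) := by norm_num
  have e3 : NE p (M2+1+1) (j+1+2) = NE p (M2+1+1) (j+3) := by norm_num
  have e4 : NE p (M2+1+1) (j+2+2) = NE p (M2+1+1) (j+4) := by norm_num
  rw [e1, e2, e3, e4] at h
  exact cancel_sq (by positivity : (0:ℝ) < ((M2:ℝ) + 1) * ((M2:ℝ) + 1 + 1)) h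


end AuxNewton

/-- The k-th elementary symmetric polynomial of `x : Fin n → ℝ`, with the
conventions `σ_0 = 1` and `σ_k = 0` for `k < 0` or `k > n`. -/
noncomputable def esymm (n : ℕ) (x : Fin n → ℝ) (k : ℤ) : ℝ :=
  if 0 ≤ k then ∑ s ∈ (Finset.univ : Finset (Fin n)).powersetCard k.toNat, ∏ i ∈ s, x i else 0

/-- The normalized elementary symmetric mean `E_k(x) = σ_k(x) / C(n,k)`. -/
noncomputable def Esymm (n : ℕ) (x : Fin n → ℝ) (k : ℤ) : ℝ :=
  esymm n x k / (n.choose k.toNat)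


/-- `S_k(x) = E_k(x) + (α+β) E_{k-1}(x) + αβ E_{k-2}(x)`. -/
noncomputable def S (n : ℕ) (α β : ℝ) (x : Fin n → ℝ) (k : ℤ) : ℝ :=
  Esymm n x k + (α + β) * Esymm n x (k - 1) + α * β * Esymm n x (k - 2)


open Polynomial in
theorem S_newton_general (n k : ℕ) (α β : ℝ) (x : Fin n → ℝ)
    (hn : 4 ≤ n) (hk1 : 3 ≤ k) (hk2 : k ≤ n - 1) :
    S n α β x k ^ 2 ≥ S n α β x ((k : ℤ) - 1) * S n α β x ((k : ℤ) + 1) := by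
  have hkn : k + 1 ≤ n := by omega
  obtain ⟨b, rfl⟩ : ∃ b, k = b + 3 := ⟨k - 3, by omega⟩
  obtain ⟨M2, rfl⟩ : ∃ M2, n = M2 + 1 + 1 := ⟨n - 2, by omega⟩
  set Ph : Polynomial ℝ := ∏ i : Fin (M2+1+1), (Polynomial.X + Polynomial.C (x i)) with hPh
  have hPhdeg : Ph.natDegree ≤ M2+1+1 := by
    refine le_trans (Polynomial.natDegree_prod_le _ _) ?_
    simp [Polynomial.natDegree_X_add_C]
  have hPhRR : RR Ph := by
    rw [hPh]
    refine Finset.prod_induction _ RR (fun a b ha hb => RR_mul ha hb) ?_ ?_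
    · have h1 := RR_C (1:ℝ); rwa [map_one] at h1
    · intro i _
      have h1 := RR_X_sub_C (-(x i))
      rwa [map_neg, sub_neg_eq_add] at h1
  set P0 : Polynomial ℝ := Polynomial.reflect (M2+1+1) Ph with hP0
  have hP0RR : RR P0 := RR_reflect (M2+1+1) hPhdeg hPhRR
  have hP0deg : P0.natDegree ≤ M2+1+1 := natDegree_reflect_le hPhdeg
  have hcoeff : ∀ j : ℕ, j ≤ M2+1+1 → P0.coeff j = esymm (M2+1+1) x (j : ℤ) := by
    intro j hj
    rw [hP0, Polynomial.coeff_reflect, Polynomial.revAt_le hj, hPh]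
    rw [Finset.prod_X_add_C_coeff Finset.univ x
      (by simpa using (by omega : M2+1+1 - j ≤ M2+1+1))]
    unfold esymm
    rw [if_pos (by positivity : (0:ℤ) ≤ (j:ℤ))]
    have h1 : (Finset.univ : Finset (Fin (M2+1+1))).card - (M2+1+1 - j) = j := by
      simp only [Finset.card_univ, Fintype.card_fin]
      omega
    rw [h1, Int.toNat_natCast]
  have hEe : ∀ j : ℕ, j ≤ M2+1+1 → Esymm (M2+1+1) x (j : ℤ) = NE P0 (M2+1+1) j := by
    intro j hj
    unfold Esymm
    rw [Int.toNat_natCast, ← hcoeff j hj]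
    rfl
  have hN : ∀ j, j + 2 ≤ M2+1+1 → NE P0 (M2+1+1) j * NE P0 (M2+1+1) (j + 2) ≤ NE P0 (M2+1+1) (j + 1) ^ 2 := by
    intro j hj
    have h := newton (j + 1) P0 (M2+1+1) hP0RR hP0deg (by omega) (by omega)
    simpa only [Nat.add_sub_cancel] using h
  have hcore := core (NE P0 (M2+1+1) b) (NE P0 (M2+1+1) (b+1)) (NE P0 (M2+1+1) (b+2))
    (NE P0 (M2+1+1) (b+3)) (NE P0 (M2+1+1) (b+4))
    (by have := hN (b+1) (by omega); norm_num at this ⊢; exact this)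
    (by have := hN b (by omega); norm_num at this ⊢; exact this)
    (by have := hN (b+2) (by omega); norm_num at this ⊢; exact this)
    (fun s => by have := newtonU M2 P0 hP0RR hP0deg s (b+1) (by omega); norm_num at this ⊢; exact this)
    (fun s => by have := newtonU M2 P0 hP0RR hP0deg s b (by omega); norm_num at this ⊢; exact this)
    (fun s t => by have := newtonW M2 P0 hP0RR hP0deg s t b (by omega); norm_num at this ⊢; exact this)
    α β
  have hS0 : S (M2+1+1) α β x ((b + 3 : ℕ) : ℤ)
      = NE P0 (M2+1+1) (b+3) + (α+β) * NE P0 (M2+1+1) (b+2) + α*β * NE P0 (M2+1+1) (b+1) := by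
    unfold S
    rw [show ((b + 3 : ℕ) : ℤ) - 1 = ((b + 2 : ℕ) : ℤ) by push_cast; ring,
      show ((b + 3 : ℕ) : ℤ) - 2 = ((b + 1 : ℕ) : ℤ) by push_cast; ring]
    rw [hEe (b+3) (by omega), hEe (b+2) (by omega), hEe (b+1) (by omega)]
  have hSm : S (M2+1+1) α β x (((b + 3 : ℕ) : ℤ) - 1)
      = NE P0 (M2+1+1) (b+2) + (α+β) * NE P0 (M2+1+1) (b+1) + α*β * NE P0 (M2+1+1) b := by
    unfold S
    rw [show (((b + 3 : ℕ) : ℤ) - 1) - 1 = ((b + 1 : ℕ) : ℤ) by push_cast; ring,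
      show (((b + 3 : ℕ) : ℤ) - 1) - 2 = ((b : ℕ) : ℤ) by push_cast; ring,
      show (((b + 3 : ℕ) : ℤ) - 1) = ((b + 2 : ℕ) : ℤ) by push_cast; ring]
    rw [hEe (b+2) (by omega), hEe (b+1) (by omega), hEe b (by omega)]
  have hSp : S (M2+1+1) α β x (((b + 3 : ℕ) : ℤ) + 1)
      = NE P0 (M2+1+1) (b+4) + (α+β) * NE P0 (M2+1+1) (b+3) + α*β * NE P0 (M2+1+1) (b+2) := by
    unfold S
    rw [show (((b + 3 : ℕ) : ℤ) + 1) - 1 = ((b + 3 : ℕ) : ℤ) by push_cast; ring,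
      show (((b + 3 : ℕ) : ℤ) + 1) - 2 = ((b + 2 : ℕ) : ℤ) by push_cast; ring,
      show (((b + 3 : ℕ) : ℤ) + 1) = ((b + 4 : ℕ) : ℤ) by push_cast; ring]
    rw [hEe (b+4) (by omega), hEe (b+3) (by omega), hEe (b+2) (by omega)]
  rw [ge_iff_le, hSm, hSp, hS0]
  linarith [hcore]
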